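/- Let n ≥ 2 be an integer and C ∈ (0, π/6). Then 2·∫_C^{π/2} ((sin z / sin C)^{2(n−1)} − 1)^{−1/2} dz ≤ 4·sin C·√(π − 2C) / √(sin 2C). In particular, the quantity Y_C = 2∫_C^{π/2}((sin z/sin C)^{2(n−1)}−1)^{−1/2}dz satisfies Y_C ≤ 4 sin C √(π−2C)/√(sin 2C) for C ∈ (0, π/6). -/

import Mathlib

open Real Set MeasureTheory
set_option maxHeartbeats 800000

private lemma rpow_neg_half_eq (x : ℝ) (hx : 0 ≤ x) : x ^ (-(1:ℝ)/2) = (Real.sqrt x)⁻¹ := by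
  rw [show (-(1:ℝ)/2) = -(1/2) by ring, Real.rpow_neg hx, Real.sqrt_eq_rpow]

private lemma rpow_neg_half_eq' (x : ℝ) : x ^ (-(1:ℝ)/2) = (Real.sqrt x)⁻¹ := by
  rcases lt_or_ge x 0 with h | h
  · rw [Real.rpow_def_of_neg h,
      show Real.cos (-(1:ℝ)/2 * π) = 0 by
        rw [show (-(1:ℝ)/2*π) = -(π/2) by ring, Real.cos_neg, Real.cos_pi_div_two],
      mul_zero, Real.sqrt_eq_zero'.mpr (le_of_lt h), inv_zero]
  · exact rpow_neg_half_eq x h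

/-- Pointwise bound on the integrand. -/
private lemma pointwise_bound (n : ℕ) (hn : 2 ≤ n) (C z : ℝ) (hC : C ∈ Set.Ioo 0 (π / 6))
    (hz : z ∈ Set.Ioc C (π / 2)) :
    ((Real.sin z / Real.sin C) ^ (2 * (n - 1)) - 1) ^ (-(1 : ℝ) / 2) ≤
      (Real.sin C * Real.sqrt 2 / Real.sqrt (Real.sin (2 * C))) * (z - C) ^ (-(1 : ℝ) / 2) := by
  obtain ⟨hC0, hC6⟩ := hC
  obtain ⟨hCz, hz2⟩ := hz
  have hpi : (0:ℝ) < π := Real.pi_pos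
  have hC2 : C < π / 2 := by linarith
  have hsC : 0 < Real.sin C := Real.sin_pos_of_pos_of_lt_pi hC0 (by linarith)
  have hsz : Real.sin C < Real.sin z :=
    Real.strictMonoOn_sin ⟨by linarith, by linarith⟩ ⟨by linarith, by linarith⟩ hCz
  have hs2C : 0 < Real.sin (2 * C) := Real.sin_pos_of_pos_of_lt_pi (by linarith) (by linarith)
  -- identity
  have hident : Real.sin z ^ 2 - Real.sin C ^ 2 = Real.sin (z - C) * Real.sin (z + C) := by
    rw [Real.sin_sub, Real.sin_add]
    linear_combination (Real.sin C ^ 2) * (Real.sin_sq_add_cos_sq z) -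
      (Real.sin z ^ 2) * (Real.sin_sq_add_cos_sq C)
  have hpi4 : π ≤ 4 := Real.pi_le_four
  have hsin1 : (z - C) / 2 ≤ Real.sin (z - C) := by
    have h := Real.mul_le_sin (x := z - C) (by linarith) (by linarith)
    have : (z - C) / 2 ≤ 2 / π * (z - C) := by
      rw [div_mul_eq_mul_div, div_le_div_iff₀ two_pos hpi]
      nlinarith
    linarith
  have hsin2 : Real.sin (2 * C) ≤ Real.sin (z + C) := by
    rcases le_or_gt (z + C) (π / 2) with h | h
    · exact Real.strictMonoOn_sin.monotoneOn ⟨by linarith, by linarith⟩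
        ⟨by linarith, by linarith⟩ (by linarith)
    · rw [show z + C = π - (π - (z + C)) by ring, Real.sin_pi_sub]
      exact Real.strictMonoOn_sin.monotoneOn ⟨by linarith, by linarith⟩
        ⟨by linarith, by linarith⟩ (by linarith)
  have hmain : (z - C) * Real.sin (2 * C) / 2 ≤ Real.sin z ^ 2 - Real.sin C ^ 2 := by
    rw [hident]
    have h1 : (z - C) / 2 * Real.sin (2 * C) ≤ Real.sin (z - C) * Real.sin (z + C) := by
      have hs0 : 0 ≤ Real.sin (z - C) := le_trans (by linarith) hsin1
      nlinarith
    linarith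
  -- core lower bound for the bracket
  have hr : 1 < Real.sin z / Real.sin C := (one_lt_div hsC).2 hsz
  have hpow : (Real.sin z / Real.sin C) ^ 2 ≤ (Real.sin z / Real.sin C) ^ (2 * (n - 1)) :=
    pow_le_pow_right₀ hr.le (by omega)
  have hsq : (Real.sin z / Real.sin C) ^ 2 - 1
      = (Real.sin z ^ 2 - Real.sin C ^ 2) / Real.sin C ^ 2 := by
    field_simp
  have h2 : (z - C) * Real.sin (2 * C) / (2 * Real.sin C ^ 2) ≤
      (Real.sin z / Real.sin C) ^ (2 * (n - 1)) - 1 := by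
    have : (z - C) * Real.sin (2 * C) / (2 * Real.sin C ^ 2) ≤
        (Real.sin z / Real.sin C) ^ 2 - 1 := by
      rw [hsq, div_le_div_iff₀ (by positivity) (by positivity)]
      nlinarith [sq_nonneg (Real.sin C)]
    linarith
  have hbpos : 0 < (z - C) * Real.sin (2 * C) / (2 * Real.sin C ^ 2) := by
    have : 0 < z - C := by linarith
    positivity
  have hstep : ((Real.sin z / Real.sin C) ^ (2 * (n - 1)) - 1) ^ (-(1 : ℝ) / 2) ≤
      ((z - C) * Real.sin (2 * C) / (2 * Real.sin C ^ 2)) ^ (-(1 : ℝ) / 2) :=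
    Real.rpow_le_rpow_of_nonpos hbpos h2 (by norm_num)
  refine hstep.trans (le_of_eq ?_)
  have hzC : (0:ℝ) < z - C := by linarith
  rw [rpow_neg_half_eq _ hbpos.le, rpow_neg_half_eq _ hzC.le]
  rw [Real.sqrt_div (by positivity), Real.sqrt_mul hzC.le, Real.sqrt_mul (by norm_num : (0:ℝ) ≤ 2),
    Real.sqrt_sq hsC.le]
  have h1 : 0 < Real.sqrt (z - C) := Real.sqrt_pos.2 hzC
  have h2' : 0 < Real.sqrt (Real.sin (2 * C)) := Real.sqrt_pos.2 hs2C
  have h3 : 0 < Real.sqrt 2 := by positivity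
  field_simp

/-- For `C ∈ (0, π/6)`, the half-period of the spherical catenoid satisfies
`Y_C = 2∫_C^{π/2} ((sin z/sin C)^{2(n−1)} − 1)^{−1/2} dz ≤ 4 sin C √(π−2C)/√(sin 2C)`. -/
theorem spherical_catenoid_halfperiod_upper_bound
    (n : ℕ) (hn : 2 ≤ n) (C : ℝ) (hC : C ∈ Set.Ioo 0 (π / 6)) :
    2 * ∫ z in C..(π / 2),
        ((Real.sin z / Real.sin C) ^ (2 * (n - 1)) - 1) ^ (-(1 : ℝ) / 2)
      ≤ 4 * Real.sin C * Real.sqrt (π - 2 * C) / Real.sqrt (Real.sin (2 * C)) := by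
  obtain ⟨hC0, hC6⟩ := hC
  have hpi : (0:ℝ) < π := Real.pi_pos
  have hC2 : C < π / 2 := by linarith
  have hsC : 0 < Real.sin C := Real.sin_pos_of_pos_of_lt_pi hC0 (by linarith)
  have hs2C : 0 < Real.sin (2 * C) := Real.sin_pos_of_pos_of_lt_pi (by linarith) (by linarith)
  set K := Real.sin C * Real.sqrt 2 / Real.sqrt (Real.sin (2 * C)) with hK
  have hK0 : 0 ≤ K := by positivity
  set f : ℝ → ℝ := fun z => ((Real.sin z / Real.sin C) ^ (2 * (n - 1)) - 1) ^ (-(1 : ℝ) / 2)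
    with hf
  set g : ℝ → ℝ := fun z => K * (z - C) ^ (-(1 : ℝ) / 2) with hg
  -- integrability of g
  have hbase : IntervalIntegrable (fun x : ℝ => x ^ (-(1 : ℝ) / 2)) volume 0 (π / 2 - C) :=
    intervalIntegral.intervalIntegrable_rpow' (by norm_num)
  have hgint : IntervalIntegrable g volume C (π / 2) := by
    have h1 := (hbase.comp_sub_right C).const_mul K
    simpa [hg] using h1
  -- integrability of f
  have hfint : IntervalIntegrable f volume C (π / 2) := by
    apply hgint.mono_fun'
    · have hmf : Measurable f := by
        rw [hf]
        simp only [rpow_neg_half_eq']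
        exact ((((Real.continuous_sin.div_const (Real.sin C)).pow _).sub
          continuous_const).sqrt.measurable).inv
      exact hmf.aestronglyMeasurable
    · rw [Set.uIoc_of_le hC2.le]
      filter_upwards [MeasureTheory.ae_restrict_mem measurableSet_Ioc] with z hz
      have hb := pointwise_bound n hn C z ⟨hC0, hC6⟩ hz
      have hfz : 0 ≤ f z := by
        rcases le_or_gt ((Real.sin z / Real.sin C) ^ (2 * (n - 1)) - 1) 0 with h | h
        · rcases lt_or_eq_of_le h with h' | h'
          · simp only [hf]
            rw [Real.rpow_def_of_neg h']
            have : Real.cos (-(1:ℝ) / 2 * π) = 0 := by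
              rw [show (-(1:ℝ)/2*π) = -(π/2) by ring, Real.cos_neg, Real.cos_pi_div_two]
            rw [this, mul_zero]
          · simp only [hf]
            rw [h', Real.zero_rpow (by norm_num : (-(1:ℝ)/2) ≠ 0)]
        · exact (Real.rpow_pos_of_pos h _).le
      simpa [Real.norm_eq_abs, abs_of_nonneg hfz] using hb
  -- compare integrals
  have hmono : (∫ z in C..(π / 2), f z) ≤ ∫ z in C..(π / 2), g z := by
    apply intervalIntegral.integral_mono_on hC2.le hfint hgint
    intro z hz
    rcases eq_or_lt_of_le hz.1 with h | h
    · have : f z = 0 := by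
        simp only [hf, ← h, div_self hsC.ne', one_pow, sub_self,
          Real.zero_rpow (by norm_num : (-(1:ℝ)/2) ≠ 0)]
      rw [this, hg]
      have : ((z:ℝ) - C) ^ (-(1 : ℝ) / 2) = 0 := by
        rw [← h, sub_self, Real.zero_rpow (by norm_num : (-(1:ℝ)/2) ≠ 0)]
      simp [this]
    · exact pointwise_bound n hn C z ⟨hC0, hC6⟩ ⟨h, hz.2⟩
  -- compute integral of g
  have hgval : (∫ z in C..(π / 2), g z) = K * (2 * Real.sqrt (π / 2 - C)) := by
    rw [hg]
    rw [intervalIntegral.integral_const_mul]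
    congr 1
    have h1 : (∫ z in C..(π / 2), (z - C) ^ (-(1 : ℝ) / 2)) =
        ∫ x in (C - C)..(π / 2 - C), x ^ (-(1 : ℝ) / 2) :=
      intervalIntegral.integral_comp_sub_right (fun x => x ^ (-(1 : ℝ) / 2)) C
    rw [h1, sub_self, integral_rpow (Or.inl (by norm_num))]
    rw [Real.zero_rpow (by norm_num : (-(1:ℝ)/2 + 1) ≠ 0)]
    rw [show (-(1:ℝ)/2 + 1) = 1/2 by norm_num]
    rw [← Real.sqrt_eq_rpow]
    ring
  have hfinal : 2 * (K * (2 * Real.sqrt (π / 2 - C))) =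
      4 * Real.sin C * Real.sqrt (π - 2 * C) / Real.sqrt (Real.sin (2 * C)) := by
    have hsqrt : Real.sqrt (π - 2 * C) = Real.sqrt 2 * Real.sqrt (π / 2 - C) := by
      rw [← Real.sqrt_mul (by norm_num : (0:ℝ) ≤ 2)]
      congr 1; ring
    rw [hsqrt, hK]
    field_simp
    ring
  calc 2 * ∫ z in C..(π / 2), f z ≤ 2 * ∫ z in C..(π / 2), g z := by linarith
    _ = 2 * (K * (2 * Real.sqrt (π / 2 - C))) := by rw [hgval]
    _ = _ := hfinal
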